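/- Let p ≥ 2 be an integer, and U_k the Newton iterates for x^p = 1-z starting at 1. Then U_k(0) = 1 for every k ≥ 0, and the Taylor expansion of U_k at 0 agrees with that of (1-z)^{1/p} up to order 2^k - 1: U_k(z) = 1 - Σ_{n=1}^{2^k - 1} (Π_{r=1}^{n-1}(rp - 1)) z^n/(n! p^n) + O(z^{2^k}). -/

import Mathlib

namespace Stmt17
noncomputable section
open Asymptotics Filter Finset

/-- coefficients of `(1-z)^{1/p}` -/
def a (p : ℕ) : ℕ → ℂ
  | 0 => 1
  | n + 1 => a p n * ((n : ℂ) * p - 1) / (((n : ℂ) + 1) * p)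

lemma a_zero (p : ℕ) : a p 0 = 1 := rfl

lemma a_rec (p : ℕ) (hp : 2 ≤ p) (n : ℕ) :
    ((n : ℂ) + 1) * p * a p (n + 1) = ((n : ℂ) * p - 1) * a p n := by
  have hp0 : (p : ℂ) ≠ 0 := Nat.cast_ne_zero.2 (by omega)
  have hn : ((n : ℂ) + 1) ≠ 0 := Nat.cast_add_one_ne_zero n
  rw [a]
  field_simp

lemma norm_a_le (p : ℕ) (hp : 2 ≤ p) (n : ℕ) : ‖a p n‖ ≤ 1 := by
  induction n with
  | zero => simp [a_zero]
  | succ n ih =>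
    rw [a, norm_div, norm_mul]
    have h1 : ‖(n : ℂ) * p - 1‖ ≤ ((n : ℝ) + 1) * p := by
      calc ‖(n : ℂ) * p - 1‖ ≤ ‖(n : ℂ) * p‖ + ‖(1 : ℂ)‖ := norm_sub_le _ _
        _ = (n : ℝ) * p + 1 := by
            simp [norm_mul]
        _ ≤ ((n : ℝ) + 1) * p := by
            have hp' : (2 : ℝ) ≤ p := by exact_mod_cast hp
            nlinarith [Nat.cast_nonneg (α := ℝ) n]
    have h2 : ‖((n : ℂ) + 1) * p‖ = ((n : ℝ) + 1) * p := by
      have : ((n : ℂ) + 1) * p = ((((n : ℝ) + 1) * p : ℝ) : ℂ) := by push_cast; ring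
      rw [this, Complex.norm_real, Real.norm_of_nonneg (by positivity)]
    have hpos : (0 : ℝ) < ((n : ℝ) + 1) * p := by positivity
    rw [h2, div_le_one hpos]
    calc ‖a p n‖ * ‖(n : ℂ) * p - 1‖ ≤ 1 * (((n : ℝ) + 1) * p) :=
        mul_le_mul ih h1 (norm_nonneg _) zero_le_one
      _ = ((n : ℝ) + 1) * p := one_mul _


lemma a_eq (p : ℕ) (hp : 2 ≤ p) : ∀ n, 1 ≤ n →
    a p n = -((∏ r ∈ Finset.range (n - 1), (((r : ℂ) + 1) * p - 1)) /
      ((n.factorial : ℂ) * (p : ℂ) ^ n)) := by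
  have hp0 : (p : ℂ) ≠ 0 := Nat.cast_ne_zero.2 (by omega)
  intro n hn
  induction n with
  | zero => omega
  | succ n ih =>
    rcases Nat.eq_zero_or_pos n with h | h
    · subst h
      simp [a]
      field_simp
    · rw [a, ih h]
      have hfac : ((n + 1 : ℕ).factorial : ℂ) = ((n : ℂ) + 1) * (n.factorial : ℂ) := by
        push_cast [Nat.factorial_succ]; ring
      have hprod : (∏ r ∈ Finset.range n, (((r : ℂ) + 1) * p - 1))
          = (∏ r ∈ Finset.range (n - 1), (((r : ℂ) + 1) * p - 1)) * ((n : ℂ) * p - 1) := by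
        conv_lhs => rw [show n = (n - 1) + 1 from by omega, Finset.prod_range_succ]
        congr 1
        rw [Nat.cast_sub h]
        push_cast
        ring
      have hn1 : ((n : ℂ) + 1) ≠ 0 := Nat.cast_add_one_ne_zero n
      have hfn : ((n.factorial : ℂ)) ≠ 0 := Nat.cast_ne_zero.2 n.factorial_ne_zero
      simp only [Nat.add_sub_cancel]
      rw [hfac, hprod]
      field_simp
      ring_nf
      rw [Finset.prod_congr rfl (fun (x : ℕ) _ => show (-1 + (x:ℂ) * p + p) = -1 + p + p * (x:ℂ) by ring)]
      ring


lemma summable_aux {c : ℕ → ℂ} {C : ℝ} (hc : ∀ n, ‖c n‖ ≤ C * (n + 1)) {y : ℂ}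
    (hy : ‖y‖ ≤ 1 / 2) : Summable fun n => c n * y ^ n := by
  have h1 : Summable fun n : ℕ => (n : ℝ) * (1 / 2) ^ n := by
    simpa using summable_pow_mul_geometric_of_norm_lt_one (R := ℝ) 1 (r := 1 / 2) (by norm_num)
  have h2 : Summable fun n : ℕ => ((1 : ℝ) / 2) ^ n :=
    summable_geometric_of_lt_one (by norm_num) (by norm_num)
  refine Summable.of_norm_bounded (g := fun n => C * ((n : ℝ) + 1) * (1 / 2) ^ n)
    (((h1.add h2).mul_left C).congr fun n => by ring) fun n => ?_
  rw [norm_mul, norm_pow]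
  have h3 : ‖y‖ ^ n ≤ (1 / 2 : ℝ) ^ n := pow_le_pow_left₀ (norm_nonneg _) hy n
  have h4 : (0:ℝ) ≤ C * ((n:ℝ)+1) := le_trans (norm_nonneg (c n)) (by exact_mod_cast hc n)
  calc ‖c n‖ * ‖y‖ ^ n ≤ (C * ((n : ℝ) + 1)) * (1 / 2) ^ n := by
        apply mul_le_mul (by exact_mod_cast hc n) h3 (by positivity) h4
    _ = C * ((n : ℝ) + 1) * (1 / 2) ^ n := by ring

lemma summable_deriv (p : ℕ) (hp : 2 ≤ p) {y : ℂ} (hy : ‖y‖ ≤ 1 / 2) :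
    Summable fun n => a p n * ((n : ℂ) * y ^ (n - 1)) := by
  have h1 : Summable fun n : ℕ => (n : ℝ) * (1 / 2) ^ (n - 1) := by
    have h0 : Summable fun n : ℕ => (n : ℝ) * (1 / 2) ^ n := by
      simpa using summable_pow_mul_geometric_of_norm_lt_one (R := ℝ) 1 (r := 1 / 2) (by norm_num)
    refine (h0.mul_left 2).congr fun n => ?_
    cases n with
    | zero => simp
    | succ m => simp only [Nat.add_sub_cancel]; push_cast; ring
  refine Summable.of_norm_bounded h1 fun n => ?_
  rw [norm_mul, norm_mul, norm_pow, Complex.norm_natCast]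
  have h3 : ‖y‖ ^ (n - 1) ≤ (1 / 2 : ℝ) ^ (n - 1) := pow_le_pow_left₀ (norm_nonneg _) hy _
  calc ‖a p n‖ * ((n : ℝ) * ‖y‖ ^ (n - 1)) ≤ 1 * ((n : ℝ) * (1 / 2) ^ (n - 1)) := by
        apply mul_le_mul (norm_a_le p hp n) (mul_le_mul_of_nonneg_left h3 (Nat.cast_nonneg n)) (by positivity) zero_le_one
    _ = (n : ℝ) * (1 / 2) ^ (n - 1) := one_mul _

def g (p : ℕ) (z : ℂ) : ℂ := ∑' n, a p n * z ^ n

lemma g_zero (p : ℕ) : g p 0 = 1 := by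
  rw [g, tsum_eq_single 0 (fun n hn => by simp [zero_pow hn])]
  simp [a]

lemma g_hasDerivAt (p : ℕ) (hp : 2 ≤ p) {y : ℂ} (hy : y ∈ Metric.ball (0 : ℂ) (1 / 2)) :
    HasDerivAt (g p) (∑' n, a p n * ((n : ℂ) * y ^ (n - 1))) y := by
  have hu : Summable fun n : ℕ => (n : ℝ) * (1 / 2) ^ (n - 1) := by
    have h0 : Summable fun n : ℕ => (n : ℝ) * (1 / 2) ^ n := by
      simpa using summable_pow_mul_geometric_of_norm_lt_one (R := ℝ) 1 (r := 1 / 2) (by norm_num)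
    refine (h0.mul_left 2).congr fun n => ?_
    cases n with
    | zero => simp
    | succ m => simp only [Nat.add_sub_cancel]; push_cast; ring
  refine hasDerivAt_tsum_of_isPreconnected hu Metric.isOpen_ball
    ((convex_ball _ _).isPreconnected) (fun n z _ => ((hasDerivAt_pow n z).const_mul (a p n)))
    (fun n z hz => ?_) (Metric.mem_ball_self (by norm_num)) ?_ hy
  · have hz2 : ‖z‖ ≤ 1 / 2 := (mem_ball_zero_iff.mp hz).le
    rw [norm_mul, norm_mul, norm_pow, Complex.norm_natCast]
    have h3 : ‖z‖ ^ (n - 1) ≤ (1 / 2 : ℝ) ^ (n - 1) := pow_le_pow_left₀ (norm_nonneg _) hz2 _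
    calc ‖a p n‖ * ((n : ℝ) * ‖z‖ ^ (n - 1)) ≤ 1 * ((n : ℝ) * (1 / 2) ^ (n - 1)) := by
          apply mul_le_mul (norm_a_le p hp n) (mul_le_mul_of_nonneg_left h3 (Nat.cast_nonneg n)) (by positivity) zero_le_one
      _ = (n : ℝ) * (1 / 2) ^ (n - 1) := one_mul _
  · exact summable_aux (c := a p) (C := 1) (fun n => by
      have := norm_a_le p hp n; nlinarith [Nat.cast_nonneg (α := ℝ) n]) (by norm_num)


lemma norm_a_le' (p : ℕ) (hp : 2 ≤ p) (n : ℕ) : ‖a p n‖ ≤ 1 * ((n : ℝ) + 1) := by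
  have := norm_a_le p hp n; nlinarith [Nat.cast_nonneg (α := ℝ) n]

lemma ode (p : ℕ) (hp : 2 ≤ p) {y : ℂ} (hy : y ∈ Metric.ball (0 : ℂ) (1 / 2)) :
    (p : ℂ) * (1 - y) * (∑' n, a p n * ((n : ℂ) * y ^ (n - 1))) = - g p y := by
  have hy2 : ‖y‖ ≤ 1 / 2 := (mem_ball_zero_iff.mp hy).le
  have S0 : Summable fun n => a p n * y ^ n := summable_aux (norm_a_le' p hp) hy2
  have S1 := summable_deriv p hp hy2
  have hb2 : ∀ n : ℕ, ‖((n : ℂ) + 1) * a p (n + 1)‖ ≤ 1 * ((n : ℝ) + 1) := fun n => by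
    rw [norm_mul]
    have h1 : ‖((n : ℂ) + 1)‖ = (n : ℝ) + 1 := by
      rw [show ((n : ℂ) + 1) = (((n : ℝ) + 1 : ℝ) : ℂ) by push_cast; ring, Complex.norm_real,
        Real.norm_of_nonneg (by positivity)]
    rw [h1, one_mul]
    nlinarith [norm_a_le p hp (n + 1), Nat.cast_nonneg (α := ℝ) n, norm_nonneg (a p (n+1))]
  have S2 : Summable fun n : ℕ => (((n : ℂ) + 1) * a p (n + 1)) * y ^ n := summable_aux hb2 hy2
  have hb3 : ∀ n : ℕ, ‖(n : ℂ) * a p n‖ ≤ 1 * ((n : ℝ) + 1) := fun n => by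
    rw [norm_mul, Complex.norm_natCast]
    nlinarith [norm_a_le p hp n, Nat.cast_nonneg (α := ℝ) n, norm_nonneg (a p n)]
  have S3 : Summable fun n : ℕ => ((n : ℂ) * a p n) * y ^ n := summable_aux hb3 hy2
  have hb4 : ∀ n : ℕ, ‖((n : ℂ) * p - 1) * a p n‖ ≤ (p : ℝ) * ((n : ℝ) + 1) := fun n => by
    rw [norm_mul]
    have h1 : ‖(n : ℂ) * p - 1‖ ≤ (p : ℝ) * ((n : ℝ) + 1) := by
      calc ‖(n : ℂ) * p - 1‖ ≤ ‖(n : ℂ) * (p : ℂ)‖ + ‖(1 : ℂ)‖ := norm_sub_le _ _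
        _ = (n : ℝ) * p + 1 := by simp [norm_mul]
        _ ≤ (p : ℝ) * ((n : ℝ) + 1) := by
            have : (2 : ℝ) ≤ p := by exact_mod_cast hp
            nlinarith [Nat.cast_nonneg (α := ℝ) n]
    nlinarith [norm_a_le p hp n, norm_nonneg (a p n),
      norm_nonneg ((n : ℂ) * p - 1), Nat.cast_nonneg (α := ℝ) n, Nat.cast_nonneg (α := ℝ) p]
  have S4 : Summable fun n : ℕ => (((n : ℂ) * p - 1) * a p n) * y ^ n := summable_aux hb4 hy2
  -- shift the derivative series
  have hD : (∑' n, a p n * ((n : ℂ) * y ^ (n - 1)))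
      = ∑' n : ℕ, (((n : ℂ) + 1) * a p (n + 1)) * y ^ n := by
    rw [Summable.tsum_eq_zero_add S1]
    simp only [Nat.cast_zero, zero_mul, mul_zero, zero_add, Nat.add_sub_cancel, Nat.cast_add,
      Nat.cast_one]
    exact tsum_congr fun n => by ring
  have hyT : y * ∑' n : ℕ, (((n : ℂ) + 1) * a p (n + 1)) * y ^ n
      = ∑' n : ℕ, ((n : ℂ) * a p n) * y ^ n := by
    rw [Summable.tsum_eq_zero_add S3]
    simp only [Nat.cast_zero, zero_mul, zero_add, Nat.cast_add, Nat.cast_one]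
    rw [← tsum_mul_left]
    exact tsum_congr fun n => by ring
  rw [hD]
  have e1 : (p : ℂ) * (1 - y) * (∑' n : ℕ, (((n : ℂ) + 1) * a p (n + 1)) * y ^ n)
      = (∑' n : ℕ, (p : ℂ) * ((((n : ℂ) + 1) * a p (n + 1)) * y ^ n))
        - ∑' n : ℕ, (p : ℂ) * (((n : ℂ) * a p n) * y ^ n) := by
    rw [tsum_mul_left, tsum_mul_left, ← hyT]; ring
  rw [e1]
  have e2 : ∑' n : ℕ, (p : ℂ) * ((((n : ℂ) + 1) * a p (n + 1)) * y ^ n)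
      = ∑' n : ℕ, (((n : ℂ) * p - 1) * a p n) * y ^ n := by
    refine tsum_congr fun n => ?_
    have h := a_rec p hp n
    calc (p : ℂ) * ((((n : ℂ) + 1) * a p (n + 1)) * y ^ n)
        = (((n : ℂ) + 1) * p * a p (n + 1)) * y ^ n := by ring
      _ = (((n : ℂ) * p - 1) * a p n) * y ^ n := by rw [h]
  rw [e2, ← Summable.tsum_sub S4 (S3.mul_left _), g, ← tsum_neg]
  exact tsum_congr fun n => by ring

lemma gp_eq (p : ℕ) (hp : 2 ≤ p) {y : ℂ} (hy : y ∈ Metric.ball (0 : ℂ) (1 / 2)) :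
    g p y ^ p = 1 - y := by
  have hp0 : (p : ℂ) ≠ 0 := Nat.cast_ne_zero.2 (by omega)
  set s := Metric.ball (0 : ℂ) (1 / 2)
  have hone : ∀ z ∈ s, (1 : ℂ) - z ≠ 0 := by
    intro z hz h
    have h1 : z = 1 := by linear_combination -h
    rw [h1] at hz
    have := mem_ball_zero_iff.mp hz
    norm_num at this
  have h0s : (0 : ℂ) ∈ s := Metric.mem_ball_self (by norm_num)
  set F : ℂ → ℂ := fun z => g p z ^ p * (1 - z)⁻¹ with hF
  have hF0 : ∀ z ∈ s, HasDerivAt F 0 z := by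
    intro z hz
    have hg := g_hasDerivAt p hp hz
    have hode := ode p hp hz
    set D := ∑' n, a p n * ((n : ℂ) * z ^ (n - 1)) with hDdef
    have h2 : (1 : ℂ) - z ≠ 0 := hone z hz
    have h1 : HasDerivAt (fun w : ℂ => (1 : ℂ) - w) (-1) z := (hasDerivAt_id z).const_sub 1
    have hinv := h1.fun_inv h2
    have hgp : HasDerivAt (fun w => g p w ^ p) ((p : ℂ) * g p z ^ (p - 1) * D) z := by
      simpa using hg.fun_pow p
    have := hgp.fun_mul hinv
    refine this.congr_deriv ?_
    have hpow : g p z ^ (p - 1) * g p z = g p z ^ p := by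
      rw [← pow_succ]; congr 1; omega
    have hD' : D = -g p z / ((p : ℂ) * (1 - z)) := by
      rw [eq_div_iff (by exact mul_ne_zero hp0 h2)]
      linear_combination hode
    rw [hD']
    field_simp
    linear_combination -hpow
  have hconst : F y = F 0 := by
    refine (convex_ball (0 : ℂ) (1 / 2)).is_const_of_fderivWithin_eq_zero
      (f := F) (fun x hx => ((hF0 x hx).differentiableAt).differentiableWithinAt)
      (fun x hx => ?_) hy h0s
    rw [fderivWithin_of_isOpen Metric.isOpen_ball hx, (hF0 x hx).hasFDerivAt.fderiv]
    ext
    simp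
  have hFy : g p y ^ p * (1 - y)⁻¹ = 1 := by
    have h3 : F 0 = 1 := by simp [hF, g_zero]
    calc g p y ^ p * (1 - y)⁻¹ = F y := rfl
      _ = F 0 := hconst
      _ = 1 := h3
  have h2 : (1 : ℂ) - y ≠ 0 := hone y hy
  field_simp at hFy
  exact hFy

lemma g_continuousAt (p : ℕ) (hp : 2 ≤ p) : ContinuousAt (g p) 0 :=
  (g_hasDerivAt p hp (Metric.mem_ball_self (by norm_num))).differentiableAt.continuousAt

lemma tailO (p : ℕ) (hp : 2 ≤ p) (N : ℕ) :
    (fun z => g p z - ∑ n ∈ Finset.range N, a p n * z ^ n) =O[nhds 0] fun z : ℂ => z ^ N := by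
  rw [isBigO_iff]
  refine ⟨2, ?_⟩
  filter_upwards [Metric.ball_mem_nhds (0 : ℂ) (by norm_num : (0 : ℝ) < 1 / 2)] with z hz
  have hz2 : ‖z‖ ≤ 1 / 2 := (mem_ball_zero_iff.mp hz).le
  have S0 : Summable fun n => a p n * z ^ n := summable_aux (norm_a_le' p hp) hz2
  have htail : g p z - ∑ n ∈ Finset.range N, a p n * z ^ n
      = ∑' n, a p (n + N) * z ^ (n + N) := by
    rw [g, ← Summable.sum_add_tsum_nat_add N S0]; ring
  rw [htail]
  have hgeo : HasSum (fun n : ℕ => ‖z‖ ^ N * (1 / 2 : ℝ) ^ n) (‖z‖ ^ N * 2) := by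
    have h := hasSum_geometric_of_lt_one (r := (1 / 2 : ℝ)) (by norm_num) (by norm_num)
    have := h.mul_left (‖z‖ ^ N)
    norm_num at this ⊢
    exact this
  have hnorm : ∀ n : ℕ, ‖a p (n + N) * z ^ (n + N)‖ ≤ ‖z‖ ^ N * (1 / 2 : ℝ) ^ n := by
    intro n
    rw [norm_mul, norm_pow, pow_add]
    calc ‖a p (n + N)‖ * (‖z‖ ^ n * ‖z‖ ^ N) ≤ 1 * ((1 / 2 : ℝ) ^ n * ‖z‖ ^ N) := by
          apply mul_le_mul (norm_a_le p hp _) ?_ (by positivity) zero_le_one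
          exact mul_le_mul_of_nonneg_right (pow_le_pow_left₀ (norm_nonneg _) hz2 n)
            (by positivity)
      _ = ‖z‖ ^ N * (1 / 2 : ℝ) ^ n := by ring
  calc ‖∑' n, a p (n + N) * z ^ (n + N)‖ ≤ ‖z‖ ^ N * 2 := tsum_of_norm_bounded hgeo hnorm
    _ = 2 * ‖z ^ N‖ := by rw [norm_pow]; ring


lemma poly_id (p : ℕ) (hp : 1 ≤ p) (u w : ℂ) :
    (p : ℂ) * u ^ (p - 1) * (u - w) - (u ^ p - w ^ p)
      = (u - w) ^ 2 * ∑ i ∈ Finset.range p, u ^ i *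
          ∑ j ∈ Finset.range (p - 1 - i), u ^ j * w ^ (p - 1 - i - 1 - j) := by
  calc (p : ℂ) * u ^ (p - 1) * (u - w) - (u ^ p - w ^ p)
      = (∑ _i ∈ Finset.range p, u ^ (p - 1)) * (u - w)
        - (∑ i ∈ Finset.range p, u ^ i * w ^ (p - 1 - i)) * (u - w) := by
        rw [geom_sum₂_mul, Finset.sum_const, Finset.card_range, nsmul_eq_mul]
    _ = (∑ i ∈ Finset.range p, (u ^ (p - 1) - u ^ i * w ^ (p - 1 - i))) * (u - w) := by
        rw [Finset.sum_sub_distrib, sub_mul]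
    _ = (∑ i ∈ Finset.range p, u ^ i *
          ((∑ j ∈ Finset.range (p - 1 - i), u ^ j * w ^ (p - 1 - i - 1 - j)) * (u - w)))
        * (u - w) := by
        refine congrArg (· * (u - w)) (Finset.sum_congr rfl fun i hi => ?_)
        rw [geom_sum₂_mul, mul_sub, ← pow_add]
        congr 2
        have := Finset.mem_range.mp hi
        omega
    _ = (u - w) ^ 2 * ∑ i ∈ Finset.range p, u ^ i *
          ∑ j ∈ Finset.range (p - 1 - i), u ^ j * w ^ (p - 1 - i - 1 - j) := by
        simp_rw [← mul_assoc]
        rw [← Finset.sum_mul, sq]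
        ring

lemma step_id (p : ℕ) (hp : 2 ≤ p) (u w : ℂ) (hu : u ≠ 0) :
    (((p : ℂ) - 1) * u + w ^ p / u ^ (p - 1)) / p - w
      = (u - w) ^ 2 * ((∑ i ∈ Finset.range p, u ^ i *
          ∑ j ∈ Finset.range (p - 1 - i), u ^ j * w ^ (p - 1 - i - 1 - j))
        / ((p : ℂ) * u ^ (p - 1))) := by
  have hp0 : (p : ℂ) ≠ 0 := Nat.cast_ne_zero.2 (by omega)
  have hupow : u ^ (p - 1) ≠ 0 := pow_ne_zero _ hu
  have hpow : u ^ (p - 1) * u = u ^ p := by rw [← pow_succ]; congr 1; omega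
  have h := poly_id p (by omega) u w
  have key : (((p : ℂ) - 1) * u + w ^ p / u ^ (p - 1)) / p - w
      = ((p : ℂ) * u ^ (p - 1) * (u - w) - (u ^ p - w ^ p)) / ((p : ℂ) * u ^ (p - 1)) := by
    field_simp
    linear_combination -hpow
  rw [key, h, mul_div_assoc]

end
end Stmt17

open Asymptotics in
theorem stmt_17 (p : ℕ) (hp : 2 ≤ p) (U : ℕ → ℂ → ℂ)
    (hU0 : ∀ z, U 0 z = 1)
    (hU : ∀ k z, U (k + 1) z =
      ((p - 1) * U k z + (1 - z) / (U k z) ^ (p - 1)) / p) :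
    (∀ k, U k 0 = 1) ∧
    ∀ k, (fun z : ℂ =>
        U k z - (1 - ∑ n ∈ Finset.Icc 1 (2 ^ k - 1),
          (∏ r ∈ Finset.range (n - 1), (((r : ℂ) + 1) * p - 1)) * z ^ n /
            (n.factorial * (p : ℂ) ^ n))) =O[nhds 0]
      fun z : ℂ => z ^ (2 ^ k) := by
  have hp0 : (p : ℂ) ≠ 0 := Nat.cast_ne_zero.2 (by omega)
  have hone : ∀ k, U k 0 = 1 := by
    intro k
    induction k with
    | zero => exact hU0 0
    | succ k ih =>
      rw [hU k 0, ih]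
      simp only [mul_one, one_pow, sub_zero, div_one]
      field_simp
      ring
  have hcont : ∀ k, ContinuousAt (U k) 0 := by
    intro k
    induction k with
    | zero =>
      rw [funext hU0]
      exact continuousAt_const
    | succ k ih =>
      rw [funext (hU k)]
      apply ContinuousAt.div_const
      refine ContinuousAt.add (continuousAt_const.mul ih) ?_
      refine ContinuousAt.div (continuousAt_const.sub continuousAt_id) (ih.pow _) ?_
      rw [hone k]; simp
  refine ⟨hone, ?_⟩
  have key : ∀ k, (fun z => U k z - Stmt17.g p z) =O[nhds 0] fun z : ℂ => z ^ 2 ^ k := by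
    intro k
    induction k with
    | zero =>
      have he : (fun z => U 0 z - Stmt17.g p z)
          = fun z => -(Stmt17.g p z - ∑ n ∈ Finset.range 1, Stmt17.a p n * z ^ n) := by
        funext z; rw [hU0 z]; simp [Stmt17.a_zero]
      rw [he]
      simpa using (Stmt17.tailO p hp 1).neg_left
    | succ k ih =>
      set R : ℂ → ℂ := fun z => (∑ i ∈ Finset.range p, U k z ^ i *
          ∑ j ∈ Finset.range (p - 1 - i), U k z ^ j * Stmt17.g p z ^ (p - 1 - i - 1 - j))
        / ((p : ℂ) * U k z ^ (p - 1)) with hR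
      have hRcont : ContinuousAt R 0 := by
        refine ContinuousAt.div ?_ (continuousAt_const.mul ((hcont k).pow _)) ?_
        · exact tendsto_finset_sum _ fun i _ => ((hcont k).pow i).mul
            (tendsto_finset_sum _ fun j _ => ((hcont k).pow j).mul
              ((Stmt17.g_continuousAt p hp).pow _))
        · rw [hone k]; simp [hp0]
      have hU0ne : ∀ᶠ z in nhds 0, U k z ≠ 0 :=
        (hcont k).eventually_ne (by rw [hone k]; exact one_ne_zero)
      have hev : (fun z => U (k + 1) z - Stmt17.g p z)
          =ᶠ[nhds 0] fun z => (U k z - Stmt17.g p z) ^ 2 * R z := by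
        filter_upwards [hU0ne, Metric.ball_mem_nhds (0 : ℂ) (by norm_num : (0 : ℝ) < 1 / 2)]
          with z hz1 hz2
        rw [hU k z, ← Stmt17.gp_eq p hp hz2]
        exact Stmt17.step_id p hp (U k z) (Stmt17.g p z) hz1
      refine hev.trans_isBigO ?_
      have h3 := (ih.pow 2).mul (hRcont.isBigO_one ℂ)
      have h4 : (fun z : ℂ => (z ^ 2 ^ k) ^ 2 * 1) = fun z : ℂ => z ^ 2 ^ (k + 1) := by
        funext z; rw [mul_one, ← pow_mul, pow_succ]
      rwa [h4] at h3
  intro k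
  have hNpos : 0 < 2 ^ k := Nat.pow_pos (by norm_num)
  have hsum : ∀ z : ℂ, (1 : ℂ) - ∑ n ∈ Finset.Icc 1 (2 ^ k - 1),
      (∏ r ∈ Finset.range (n - 1), (((r : ℂ) + 1) * p - 1)) * z ^ n /
        ((n.factorial : ℂ) * (p : ℂ) ^ n)
      = ∑ n ∈ Finset.range (2 ^ k), Stmt17.a p n * z ^ n := by
    intro z
    rw [Finset.range_eq_Ico, Finset.sum_eq_sum_Ico_succ_bot hNpos]
    have hIcc : Finset.Ico 1 (2 ^ k) = Finset.Icc 1 (2 ^ k - 1) := by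
      rw [← Finset.Ico_add_one_right_eq_Icc]; congr 1; omega
    rw [hIcc, Stmt17.a_zero]
    have hterm : ∀ n ∈ Finset.Icc 1 (2 ^ k - 1), Stmt17.a p n * z ^ n
        = -((∏ r ∈ Finset.range (n - 1), (((r : ℂ) + 1) * p - 1)) * z ^ n /
            ((n.factorial : ℂ) * (p : ℂ) ^ n)) := by
      intro n hn
      rw [Stmt17.a_eq p hp n (Finset.mem_Icc.mp hn).1]
      ring
    rw [Finset.sum_congr rfl hterm, Finset.sum_neg_distrib, sub_eq_add_neg]
    congr 2
    · simp
  have h5 := (key k).add (Stmt17.tailO p hp (2 ^ k))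
  have h6 : (fun z : ℂ => U k z - (1 - ∑ n ∈ Finset.Icc 1 (2 ^ k - 1),
      (∏ r ∈ Finset.range (n - 1), (((r : ℂ) + 1) * p - 1)) * z ^ n /
        ((n.factorial : ℂ) * (p : ℂ) ^ n)))
      = fun z => (U k z - Stmt17.g p z) + (Stmt17.g p z - ∑ n ∈ Finset.range (2 ^ k), Stmt17.a p n * z ^ n) := by
    funext z; rw [← hsum z]; ring
  rw [h6]
  simpa using h5
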